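/- Let ρ be a density matrix on n ≥ 2 qubits and let i ≠ j be two qubit indices. If Tr(ρ · X_iX_j) = 1 and Tr(ρ · Z_iZ_j) = 1, where X_iX_j (resp. Z_iZ_j) denotes the Pauli operator acting as X (resp. Z) on qubits i and j and as the identity elsewhere, then ρ = |φ₊⟩⟨φ₊|_{ij} ⊗ σ, where |φ₊⟩ = (|00⟩+|11⟩)/√2 sits on qubits i and j and σ is some density matrix on the remaining n−2 qubits. -/

import Mathlib

open scoped Matrix ComplexOrder ENNReal Classical

noncomputable section

abbrev QVec (n : ℕ) := (Fin n → Fin 2) → ℂ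
abbrev QMat (n : ℕ) := Matrix (Fin n → Fin 2) (Fin n → Fin 2) ℂ

/-- `ψ` is a unit vector (a pure state). -/
def IsUnitVec {n : ℕ} (ψ : QVec n) : Prop := ∑ x, Complex.normSq (ψ x) = 1

/-- The ℓ² norm of a vector. -/
def vnorm {n : ℕ} (v : QVec n) : ℝ := Real.sqrt (∑ x, Complex.normSq (v x))

/-- The density matrix `|ψ⟩⟨ψ|`. -/
def dm {n : ℕ} (ψ : QVec n) : QMat n := Matrix.vecMulVec ψ (star ψ)

/-- The four single-qubit Pauli matrices I, X, Y, Z. -/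
def pauli1 : Fin 4 → Matrix (Fin 2) (Fin 2) ℂ :=
  ![1, !![0, 1; 1, 0], !![0, -Complex.I; Complex.I, 0], !![1, 0; 0, -1]]

/-- The `n`-qubit Pauli operator `P₁ ⊗ ⋯ ⊗ P_n` given by a string `p`. -/
def pauliOp {n : ℕ} (p : Fin n → Fin 4) : QMat n :=
  fun x y => ∏ j, pauli1 (p j) (x j) (y j)

/-- The `n`-qubit Pauli group: matrices `i^a · P₁ ⊗ ⋯ ⊗ P_n`. -/
def PauliGroup (n : ℕ) : Set (QMat n) :=
  {M | ∃ (a : Fin 4) (p : Fin n → Fin 4), M = Complex.I ^ (a : ℕ) • pauliOp p}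

/-- A Hermitian Pauli operator: `± P₁ ⊗ ⋯ ⊗ P_n`. -/
def IsHermPauli {n : ℕ} (M : QMat n) : Prop :=
  ∃ (s : ℂ) (p : Fin n → Fin 4), (s = 1 ∨ s = -1) ∧ M = s • pauliOp p

/-- The stabilizer group `G = {P ∈ 𝒫_n : P|ψ⟩ = |ψ⟩}` of a pure state. -/
def stabGroup {n : ℕ} (ψ : QVec n) : Set (QMat n) :=
  {P | P ∈ PauliGroup n ∧ P.mulVec ψ = ψ}

/-- `M` is supported on the qubits in `A` (acts as the identity on the rest),
i.e. `M = f_A ⊗ 𝟙` for some matrix `f` on the `A` qubits. -/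
def MatSupportedOn {n : ℕ} (A : Finset (Fin n)) (M : QMat n) : Prop :=
  ∃ f : ({j // j ∈ A} → Fin 2) → ({j // j ∈ A} → Fin 2) → ℂ,
    ∀ x y, M x y =
      if ∀ j ∉ A, x j = y j then f (fun j => x j.1) (fun j => y j.1) else 0

/-- The local stabilizer subgroup `G_A`: stabilizers acting as the identity outside `A`. -/
def localStab {n : ℕ} (ψ : QVec n) (A : Finset (Fin n)) : Set (QMat n) :=
  {P | P ∈ stabGroup ψ ∧ MatSupportedOn A P}

/-- `log₂` of the cardinality of a set. -/
def logCard {α : Type*} (S : Set α) : ℝ := Real.logb 2 S.ncard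

/-- The stabilizer entanglement `ℰ(ψ; A|B) = (|S| − |S_A| − |S_B|)/2` (with `B = Aᶜ`). -/
def stabEnt {n : ℕ} (ψ : QVec n) (A : Finset (Fin n)) : ℝ :=
  (logCard (stabGroup ψ) - logCard (localStab ψ A) - logCard (localStab ψ Aᶜ)) / 2

/-- Combine an assignment on `A` and on `Aᶜ` into one on all qubits. -/
def mergeFn {n : ℕ} (A : Finset (Fin n)) (x : {j // j ∈ A} → Fin 2)
    (z : {j // j ∈ Aᶜ} → Fin 2) : Fin n → Fin 2 :=
  fun j => if h : j ∈ A then x ⟨j, h⟩ else z ⟨j, Finset.mem_compl.mpr h⟩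

/-- The reduced density matrix `ψ_A = Tr_{Aᶜ} |ψ⟩⟨ψ|`. -/
def reducedDM {n : ℕ} (A : Finset (Fin n)) (ψ : QVec n) :
    Matrix ({j // j ∈ A} → Fin 2) ({j // j ∈ A} → Fin 2) ℂ :=
  fun x y => ∑ z : {j // j ∈ Aᶜ} → Fin 2, ψ (mergeFn A x z) * star (ψ (mergeFn A y z))

/-- The α-Rényi entropy (base 2) of a Hermitian matrix, defined through its eigenvalues:
`S₀ = log₂ rank`, `S₁` the von Neumann entropy, `S_∞ = −log₂` (largest eigenvalue, which is
the operator norm for positive semidefinite matrices), and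
`S_α = (1−α)⁻¹ log₂ Σ λ_i^α` otherwise. -/
def renyi {m : Type*} [Fintype m] [DecidableEq m] (α : ℝ≥0∞)
    (ρ : Matrix m m ℂ) : ℝ :=
  if h : ρ.IsHermitian then
    if α = 0 then Real.logb 2 (ρ.rank : ℝ)
    else if α = 1 then -∑ i, h.eigenvalues i * Real.logb 2 (h.eigenvalues i)
    else if α = ⊤ then -Real.logb 2 (⨆ i, h.eigenvalues i)
    else (1 / (1 - α.toReal)) * Real.logb 2 (∑ i, h.eigenvalues i ^ α.toReal)
  else 0

def IsUnitary {n : ℕ} (U : QMat n) : Prop := U * Uᴴ = 1 ∧ Uᴴ * U = 1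

/-- A Clifford unitary: a unitary whose conjugation action maps the Pauli group onto itself. -/
def IsClifford {n : ℕ} (U : QMat n) : Prop :=
  IsUnitary U ∧ (fun P => U * P * Uᴴ) '' PauliGroup n = PauliGroup n

/-- Amplitudes of the Bell pair `|φ₊⟩ = (|00⟩+|11⟩)/√2`. -/
def bellAmp (a b : Fin 2) : ℂ := if a = b then ((Real.sqrt 2 : ℝ) : ℂ)⁻¹ else 0

/-- Trace out the last `m` qubits of a pure state on `n + m` qubits. -/
def traceOutLast {n m : ℕ} (Ψ : QVec (n + m)) : QMat n :=
  fun x y => ∑ z : Fin m → Fin 2,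
    Ψ (Fin.append x z) * star (Ψ (Fin.append y z))

/-- `Tr √ρ` for a positive semidefinite matrix (junk value `0` otherwise). -/
def sqrtTrace {m : Type*} [Fintype m] [DecidableEq m] (ρ : Matrix m m ℂ) : ℝ :=
  if h : ρ.PosSemidef then
    (h.1.eigenvectorUnitary.1 * Matrix.diagonal (((↑) : ℝ → ℂ) ∘ Real.sqrt ∘ h.1.eigenvalues) *
      (star h.1.eigenvectorUnitary : Matrix m m ℂ)).trace.re else 0

/-- `S_{1/2}(ψ_A) = 2 log₂ Tr √ψ_A`. -/
def sHalf {n : ℕ} (A : Finset (Fin n)) (ψ : QVec n) : ℝ :=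
  2 * Real.logb 2 (sqrtTrace (reducedDM A ψ))

/-- The set `SEP^{(E)}(A;B)`: convex hull of pure states with `S_{1/2}` entanglement ≤ E. -/
def SEPE {n : ℕ} (A : Finset (Fin n)) (E : ℝ) : Set (QMat n) :=
  convexHull ℝ {ρ | ∃ ψ : QVec n, IsUnitVec ψ ∧ sHalf A ψ ≤ E ∧ ρ = dm ψ}

/-- `ψ` is a product state across the bipartition `A | Aᶜ`. -/
def IsProdAcross {n : ℕ} (A : Finset (Fin n)) (ψ : QVec n) : Prop :=
  ∃ (f : ({j // j ∈ A} → Fin 2) → ℂ) (g : ({j // j ∈ Aᶜ} → Fin 2) → ℂ),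
    ∀ x, ψ x = f (fun j => x j.1) * g (fun j => x j.1)

/-- The separable states across `A | Aᶜ`. -/
def SEPset {n : ℕ} (A : Finset (Fin n)) : Set (QMat n) :=
  convexHull ℝ {ρ | ∃ ψ : QVec n, IsUnitVec ψ ∧ IsProdAcross A ψ ∧ ρ = dm ψ}

/-- The trace norm `‖X‖₁ = Tr √(XᴴX)` (sum of singular values). -/
def traceNorm {m : Type*} [Fintype m] [DecidableEq m] (X : Matrix m m ℂ) : ℝ :=
  sqrtTrace (Xᴴ * X)

end

noncomputable section
namespace St9

/-- trace of `Mᴴ*M` zero forces `M = 0`. -/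
lemma trace_ct_self_eq_zero {m k : Type*} [Fintype m] [Fintype k]
    {M : Matrix m k ℂ} (h : (Mᴴ * M).trace = 0) : M = 0 := by
  have key : (Mᴴ * M).trace = ((∑ j, ∑ i, Complex.normSq (M i j) : ℝ) : ℂ) := by
    simp only [Matrix.trace, Matrix.diag, Matrix.mul_apply, Matrix.conjTranspose_apply]
    push_cast
    refine Finset.sum_congr rfl fun j _ => Finset.sum_congr rfl fun i _ => ?_
    rw [Complex.normSq_eq_conj_mul_self]; rfl
  rw [key, Complex.ofReal_eq_zero] at h
  have hz := (Finset.sum_eq_zero_iff_of_nonneg (fun j _ =>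
    Finset.sum_nonneg fun i _ => Complex.normSq_nonneg _)).mp h
  ext i j
  have := (Finset.sum_eq_zero_iff_of_nonneg (fun i _ => Complex.normSq_nonneg _)).mp
    (hz j (Finset.mem_univ j)) i (Finset.mem_univ i)
  simpa using Complex.normSq_eq_zero.mp this

open scoped MatrixOrder in
lemma psd_mul_ct_self_trace_zero {m : Type*} [Fintype m] [DecidableEq m]
    {A : Matrix m m ℂ} (hA : A.PosSemidef) (B : Matrix m m ℂ)
    (h : (A * (Bᴴ * B)).trace = 0) : A * (Bᴴ * B) = 0 := by
  obtain ⟨C, rfl⟩ := CStarAlgebra.nonneg_iff_eq_star_mul_self.mp hA.nonneg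
  rw [Matrix.star_eq_conjTranspose] at h ⊢
  have h2 : ((B * Cᴴ)ᴴ * (B * Cᴴ)).trace = 0 := by
    rw [Matrix.conjTranspose_mul, Matrix.conjTranspose_conjTranspose]
    have e1 : C * Bᴴ * (B * Cᴴ) = (C * Bᴴ * B) * Cᴴ := by simp [Matrix.mul_assoc]
    rw [e1, Matrix.trace_mul_comm, ← h, Matrix.mul_assoc, Matrix.mul_assoc]
  have hBC : B * Cᴴ = 0 := trace_ct_self_eq_zero h2
  have hCB : C * Bᴴ = 0 := by
    have := congrArg Matrix.conjTranspose hBC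
    simpa [Matrix.conjTranspose_mul] using this
  calc Cᴴ * C * (Bᴴ * B) = Cᴴ * (C * Bᴴ) * B := by
        rw [Matrix.mul_assoc, Matrix.mul_assoc, Matrix.mul_assoc]
    _ = 0 := by rw [hCB, Matrix.mul_zero, Matrix.zero_mul]

variable {n : ℕ}

/-- flip bits `i` and `j`. -/
def flipij (i j : Fin n) (x : Fin n → Fin 2) : Fin n → Fin 2 :=
  fun k => if k = i ∨ k = j then x k + 1 else x k

/-- the `Z_iZ_j` sign. -/
def zsij (i j : Fin n) (x : Fin n → Fin 2) : ℂ :=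
  (if x i = 1 then -1 else 1) * (if x j = 1 then -1 else 1)

/-- merge values at `i`, `j` with an assignment on the complement. -/
def Fij (i j : Fin n) (a b : Fin 2)
    (u : {k // k ∈ (({i, j} : Finset (Fin n))ᶜ : Finset (Fin n))} → Fin 2) :
    Fin n → Fin 2 :=
  fun k => if h : k ∈ (({i, j} : Finset (Fin n))ᶜ : Finset (Fin n)) then u ⟨k, h⟩
    else if k = i then a else b

def resij (i j : Fin n) (x : Fin n → Fin 2) :
    {k // k ∈ (({i, j} : Finset (Fin n))ᶜ : Finset (Fin n))} → Fin 2 :=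
  fun k => x k.1

variable {i j : Fin n}

lemma mem_complij {k : Fin n} :
    k ∈ (({i, j} : Finset (Fin n))ᶜ : Finset (Fin n)) ↔ k ≠ i ∧ k ≠ j := by
  simp [not_or]

lemma flipij_invol (x : Fin n → Fin 2) : flipij i j (flipij i j x) = x := by
  funext k
  by_cases h : k = i ∨ k = j <;> simp [flipij, h]
  omega

lemma flipij_iff {x y : Fin n → Fin 2} : x = flipij i j y ↔ y = flipij i j x := by
  constructor <;> rintro rfl <;> rw [flipij_invol]

lemma not_mem_complij_i : ¬ (i ∈ (({i, j} : Finset (Fin n))ᶜ : Finset (Fin n))) := by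
  simp [mem_complij]

lemma not_mem_complij_j : ¬ (j ∈ (({i, j} : Finset (Fin n))ᶜ : Finset (Fin n))) := by
  simp [mem_complij]

lemma Fij_apply_i (a b : Fin 2) (u) : Fij i j a b u i = a := by
  simp [Fij, dif_neg not_mem_complij_i]

lemma Fij_apply_j (hij : i ≠ j) (a b : Fin 2) (u) : Fij i j a b u j = b := by
  simp only [Fij, dif_neg not_mem_complij_j, if_neg (Ne.symm hij)]

lemma Fij_apply_mem (a b : Fin 2) (u) {k : Fin n}
    (h : k ∈ (({i, j} : Finset (Fin n))ᶜ : Finset (Fin n))) : Fij i j a b u k = u ⟨k, h⟩ := by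
  simp only [Fij, dif_pos h]

lemma resij_Fij (a b : Fin 2) (u) : resij i j (Fij i j a b u) = u := by
  funext k; exact Fij_apply_mem a b u k.2

lemma Fij_resij (hij : i ≠ j) (x : Fin n → Fin 2) :
    Fij i j (x i) (x j) (resij i j x) = x := by
  funext k
  by_cases h : k ∈ (({i, j} : Finset (Fin n))ᶜ : Finset (Fin n))
  · rw [Fij_apply_mem _ _ _ h]; rfl
  · rw [mem_complij] at h
    push_neg at h
    by_cases hk : k = i
    · subst hk; exact Fij_apply_i _ _ _
    · have hkj : k = j := h hk
      subst hkj; exact Fij_apply_j hij _ _ _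

lemma flip_Fij (hij : i ≠ j) (a b : Fin 2) (u) :
    flipij i j (Fij i j a b u) = Fij i j (a + 1) (b + 1) u := by
  funext k
  by_cases h : k ∈ (({i, j} : Finset (Fin n))ᶜ : Finset (Fin n))
  · have hk := mem_complij.mp h
    simp only [flipij, if_neg (not_or.mpr hk), Fij_apply_mem _ _ _ h]
  · rw [mem_complij] at h
    push_neg at h
    by_cases hk : k = i
    · subst hk
      simp [flipij, Fij_apply_i]
    · have hkj : k = j := h hk
      subst hkj
      simp [flipij, Fij_apply_j hij]

lemma resij_flipij (x : Fin n → Fin 2) : resij i j (flipij i j x) = resij i j x := by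
  funext k
  have hk := mem_complij.mp k.2
  simp only [resij, flipij, if_neg (not_or.mpr hk)]

/-- sum over the range of an injective map. -/
lemma sum_range_eq {α β M : Type*} [Fintype α] [Fintype β] [AddCommMonoid M] [DecidableEq β]
    (e : α → β) (he : Function.Injective e) (f : β → M)
    (hf : ∀ x, (∀ u, x ≠ e u) → f x = 0) : ∑ x, f x = ∑ u, f (e u) := by
  rw [← Finset.sum_image (g := e) (f := f) (fun a _ b _ h => he h)]
  refine (Finset.sum_subset (Finset.subset_univ _) fun x _ hx => hf x fun u hu => ?_).symm
  exact hx (hu ▸ Finset.mem_image_of_mem e (Finset.mem_univ u))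

lemma pauli1_I (a b : Fin 2) : pauli1 0 a b = if b = a then 1 else 0 := by
  fin_cases a <;> fin_cases b <;> simp [pauli1]

lemma pauli1_X (a b : Fin 2) : pauli1 1 a b = if b = a + 1 then 1 else 0 := by
  fin_cases a <;> fin_cases b <;> simp [pauli1]

lemma pauli1_Z (a b : Fin 2) : pauli1 3 a b = if a = b then (if a = 1 then -1 else 1) else 0 := by
  fin_cases a <;> fin_cases b <;> simp [pauli1]

lemma pauliX_apply (hij : i ≠ j) (x y : Fin n → Fin 2) :
    pauliOp (fun k => if k = i ∨ k = j then (1 : Fin 4) else 0) x y =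
      if y = flipij i j x then 1 else 0 := by
  have h1 : pauliOp (fun k => if k = i ∨ k = j then (1 : Fin 4) else 0) x y =
      ∏ k, if y k = flipij i j x k then (1 : ℂ) else 0 := by
    refine Finset.prod_congr rfl fun k _ => ?_
    beta_reduce
    by_cases hk : k = i ∨ k = j
    · rw [if_pos hk, pauli1_X]
      simp only [flipij, if_pos hk]
    · rw [if_neg hk, pauli1_I]
      simp only [flipij, if_neg hk]
  rw [h1, Fintype.prod_boole]
  by_cases h : y = flipij i j x
  · rw [if_pos (fun k => congrFun h k), if_pos h]
  · rw [if_neg (fun hall => h (funext hall)), if_neg h]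

lemma pauliZ_apply (hij : i ≠ j) (x y : Fin n → Fin 2) :
    pauliOp (fun k => if k = i ∨ k = j then (3 : Fin 4) else 0) x y =
      if x = y then zsij i j x else 0 := by
  by_cases hxy : x = y
  · subst hxy
    rw [if_pos rfl]
    have h1 : pauliOp (fun k => if k = i ∨ k = j then (3 : Fin 4) else 0) x x =
        ∏ k, (if k = i ∨ k = j then (if x k = 1 then (-1 : ℂ) else 1) else 1) := by
      refine Finset.prod_congr rfl fun k _ => ?_
      beta_reduce
      by_cases hk : k = i ∨ k = j
      · rw [if_pos hk, if_pos hk, pauli1_Z, if_pos rfl]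
      · rw [if_neg hk, if_neg hk, pauli1_I, if_pos rfl]
    rw [h1]
    rw [← Finset.prod_subset (Finset.subset_univ ({i, j} : Finset (Fin n)))
      (fun k _ hk => by
        rw [if_neg]
        intro hc
        exact hk (by rcases hc with rfl | rfl <;> simp))]
    rw [Finset.prod_pair hij]
    simp [zsij]
  · rw [if_neg hxy]
    obtain ⟨k, hk⟩ := Function.ne_iff.mp hxy
    refine Finset.prod_eq_zero (Finset.mem_univ k) ?_
    beta_reduce
    by_cases h : k = i ∨ k = j
    · rw [if_pos h, pauli1_Z, if_neg hk]
    · rw [if_neg h, pauli1_I, if_neg (Ne.symm hk)]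

/-- the crucial stabilizer fact: `Tr(ρ S) = 1` with `S` a Hermitian involution and
`ρ` a state forces `ρ S = S ρ = ρ`. -/
lemma stab_eq {ρ S : QMat n} (hρ : ρ.PosSemidef) (htr : ρ.trace = 1)
    (hSH : Sᴴ = S) (hSS : S * S = 1) (htrS : (ρ * S).trace = 1) :
    ρ * S = ρ ∧ S * ρ = ρ := by
  have hM : (1 - S)ᴴ * (1 - S) = (2 : ℂ) • (1 - S) := by
    rw [Matrix.conjTranspose_sub, Matrix.conjTranspose_one, hSH, sub_mul, one_mul, mul_sub,
      mul_one, hSS]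
    module
  have htr0 : (ρ * ((1 - S)ᴴ * (1 - S))).trace = 0 := by
    rw [hM, mul_smul_comm, Matrix.trace_smul, Matrix.mul_sub, Matrix.mul_one,
      Matrix.trace_sub, htr, htrS, sub_self, smul_zero]
  have h0 := psd_mul_ct_self_trace_zero hρ (1 - S) htr0
  rw [hM, mul_smul_comm] at h0
  have h1 : ρ * (1 - S) = 0 := by
    rcases smul_eq_zero.mp h0 with h | h
    · exact absurd h (by norm_num)
    · exact h
  rw [Matrix.mul_sub, Matrix.mul_one, sub_eq_zero] at h1
  refine ⟨h1.symm, ?_⟩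
  have h2 := congrArg Matrix.conjTranspose h1
  rwa [Matrix.conjTranspose_mul, hSH, hρ.1, eq_comm] at h2

end St9
end

noncomputable section

theorem statement9 (n : ℕ) (hn : 2 ≤ n) (i j : Fin n) (hij : i ≠ j)
    (ρ : QMat n) (hρ : ρ.PosSemidef) (htr : ρ.trace = 1)
    (hX : Matrix.trace (ρ * pauliOp (fun k => if k = i ∨ k = j then 1 else 0)) = 1)
    (hZ : Matrix.trace (ρ * pauliOp (fun k => if k = i ∨ k = j then 3 else 0)) = 1) :
    ∃ σ : Matrix ({k // k ∈ (({i, j} : Finset (Fin n))ᶜ : Finset (Fin n))} → Fin 2)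
        ({k // k ∈ (({i, j} : Finset (Fin n))ᶜ : Finset (Fin n))} → Fin 2) ℂ,
      σ.PosSemidef ∧ σ.trace = 1 ∧
      ∀ x y, ρ x y = bellAmp (x i) (x j) * star (bellAmp (y i) (y j)) *
        σ (fun m => x m.1) (fun m => y m.1) := by
  classical
  have hPapp := St9.pauliX_apply hij
  have hQapp := St9.pauliZ_apply hij
  -- Hermitian involution facts for P
  have hPH : (pauliOp (fun k => if k = i ∨ k = j then (1 : Fin 4) else 0) : QMat n)ᴴ =
      pauliOp (fun k => if k = i ∨ k = j then (1 : Fin 4) else 0) := by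
    ext x y
    rw [Matrix.conjTranspose_apply, hPapp, hPapp]
    by_cases h : x = St9.flipij i j y
    · rw [if_pos h, if_pos (St9.flipij_iff.mp h), star_one]
    · rw [if_neg h, if_neg (fun hh => h (St9.flipij_iff.mp hh)), star_zero]
  have hPP : (pauliOp (fun k => if k = i ∨ k = j then (1 : Fin 4) else 0) : QMat n) *
      pauliOp (fun k => if k = i ∨ k = j then (1 : Fin 4) else 0) = 1 := by
    ext x y
    rw [Matrix.mul_apply]
    simp only [hPapp, ite_mul, one_mul, zero_mul]
    rw [Finset.sum_ite_eq' Finset.univ (St9.flipij i j x)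
      (fun z => if y = St9.flipij i j z then (1 : ℂ) else 0)]
    rw [if_pos (Finset.mem_univ _), St9.flipij_invol, Matrix.one_apply]
    by_cases h : x = y
    · rw [if_pos h, if_pos h.symm]
    · rw [if_neg h, if_neg (fun hh => h hh.symm)]
  have hQH : (pauliOp (fun k => if k = i ∨ k = j then (3 : Fin 4) else 0) : QMat n)ᴴ =
      pauliOp (fun k => if k = i ∨ k = j then (3 : Fin 4) else 0) := by
    ext x y
    rw [Matrix.conjTranspose_apply, hQapp, hQapp]
    by_cases h : x = y
    · subst h
      rw [if_pos rfl]
      unfold St9.zsij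
      by_cases h1 : x i = 1 <;> by_cases h2 : x j = 1 <;> simp [h1, h2]
    · rw [if_neg (fun hh => h hh.symm), if_neg h, star_zero]
  have hQQ : (pauliOp (fun k => if k = i ∨ k = j then (3 : Fin 4) else 0) : QMat n) *
      pauliOp (fun k => if k = i ∨ k = j then (3 : Fin 4) else 0) = 1 := by
    ext x y
    rw [Matrix.mul_apply]
    simp only [hQapp, ite_mul, zero_mul]
    rw [Finset.sum_ite_eq Finset.univ x
      (fun z => St9.zsij i j x * if z = y then St9.zsij i j z else 0)]
    rw [if_pos (Finset.mem_univ _), Matrix.one_apply]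
    by_cases h : x = y
    · subst h
      rw [if_pos rfl]
      unfold St9.zsij
      by_cases h1 : x i = 1 <;> by_cases h2 : x j = 1 <;> simp [h1, h2]
    · rw [if_neg h, if_neg h, mul_zero]
  obtain ⟨hρP, hPρ⟩ := St9.stab_eq hρ htr hPH hPP hX
  obtain ⟨hρQ, hQρ⟩ := St9.stab_eq hρ htr hQH hQQ hZ
  -- entrywise consequences
  have hXl : ∀ x y, ρ (St9.flipij i j x) y = ρ x y := by
    intro x y
    have h : (pauliOp (fun k => if k = i ∨ k = j then (1 : Fin 4) else 0) * ρ) x y = ρ x y := by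
      rw [hPρ]
    rw [Matrix.mul_apply] at h
    simp only [hPapp, ite_mul, one_mul, zero_mul] at h
    rwa [Finset.sum_ite_eq' Finset.univ (St9.flipij i j x) (fun z => ρ z y),
      if_pos (Finset.mem_univ _)] at h
  have hXr : ∀ x y, ρ x (St9.flipij i j y) = ρ x y := by
    intro x y
    have h : (ρ * pauliOp (fun k => if k = i ∨ k = j then (1 : Fin 4) else 0)) x y = ρ x y := by
      rw [hρP]
    rw [Matrix.mul_apply] at h
    have hrw : ∀ z, (if y = St9.flipij i j z then (1 : ℂ) else 0) =
        if z = St9.flipij i j y then 1 else 0 := by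
      intro z
      by_cases hz : z = St9.flipij i j y
      · rw [if_pos hz, if_pos (St9.flipij_iff.mp hz)]
      · rw [if_neg hz, if_neg (fun hh => hz (St9.flipij_iff.mp hh))]
    simp only [hPapp, hrw, mul_ite, mul_one, mul_zero] at h
    rwa [Finset.sum_ite_eq' Finset.univ (St9.flipij i j y) (fun z => ρ x z),
      if_pos (Finset.mem_univ _)] at h
  have hzsneg : ∀ x : Fin n → Fin 2, x i ≠ x j → St9.zsij i j x = -1 := by
    intro x hne
    unfold St9.zsij
    have h1 : x i = 0 ∨ x i = 1 := by omega
    rcases h1 with h1 | h1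
    · have h2 : x j = 1 := by omega
      simp [h1, h2]
    · have h2 : x j = 0 := by omega
      simp [h1, h2]
  have hZl : ∀ x y, x i ≠ x j → ρ x y = 0 := by
    intro x y hne
    have h : (pauliOp (fun k => if k = i ∨ k = j then (3 : Fin 4) else 0) * ρ) x y = ρ x y := by
      rw [hQρ]
    rw [Matrix.mul_apply] at h
    simp only [hQapp, ite_mul, zero_mul] at h
    rw [Finset.sum_ite_eq Finset.univ x (fun z => St9.zsij i j x * ρ z y),
      if_pos (Finset.mem_univ _), hzsneg x hne] at h
    linear_combination (-1/2 : ℂ) * h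
  have hZr : ∀ x y, y i ≠ y j → ρ x y = 0 := by
    intro x y hne
    have h : (ρ * pauliOp (fun k => if k = i ∨ k = j then (3 : Fin 4) else 0)) x y = ρ x y := by
      rw [hρQ]
    rw [Matrix.mul_apply] at h
    simp only [hQapp, mul_ite, mul_zero] at h
    rw [Finset.sum_ite_eq' Finset.univ y (fun z => ρ x z * St9.zsij i j z),
      if_pos (Finset.mem_univ _), hzsneg y hne] at h
    linear_combination (-1/2 : ℂ) * h
  -- the reduced state
  have heinj : Function.Injective (fun u => St9.Fij i j 0 0 u) := by
    intro u v h
    have h2 := congrArg (St9.resij i j) h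
    rwa [St9.resij_Fij, St9.resij_Fij] at h2
  have hherm : ∀ a b, star (ρ a b) = ρ b a := by
    intro a b
    have : ρᴴ b a = ρ b a := by rw [hρ.1]
    rwa [Matrix.conjTranspose_apply] at this
  refine ⟨fun u v => 2 * ρ (St9.Fij i j 0 0 u) (St9.Fij i j 0 0 v), Matrix.PosSemidef.of_dotProduct_mulVec_nonneg ?_ ?_, ?_, ?_⟩
  · -- Hermitian
    show _ᴴ = _
    ext u v
    show star (2 * ρ (St9.Fij i j 0 0 v) (St9.Fij i j 0 0 u)) = _
    rw [star_mul', hherm]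
    simp [mul_comm]
  · -- quadratic form
    intro w
    set W : QVec n := fun x =>
      if x = St9.Fij i j 0 0 (St9.resij i j x) then w (St9.resij i j x) else 0 with hWdef
    have hWe : ∀ u, W (St9.Fij i j 0 0 u) = w u := by
      intro u
      rw [hWdef]
      simp only
      rw [St9.resij_Fij, if_pos rfl]
    have hW0 : ∀ x, (∀ u, x ≠ St9.Fij i j 0 0 u) → W x = 0 := by
      intro x hx
      rw [hWdef]
      simp only
      rw [if_neg (hx _)]
    have hq := hρ.dotProduct_mulVec_nonneg W
    have h1 : dotProduct (star W) (ρ *ᵥ W) =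
        ∑ u, star (w u) * ∑ v, ρ (St9.Fij i j 0 0 u) (St9.Fij i j 0 0 v) * w v := by
      simp only [dotProduct, Pi.star_apply, Matrix.mulVec]
      rw [St9.sum_range_eq _ heinj (fun x => star (W x) * ∑ y, ρ x y * W y)
        (fun x hx => by beta_reduce; rw [hW0 x hx, star_zero, zero_mul])]
      refine Finset.sum_congr rfl fun u _ => ?_
      rw [hWe]
      congr 1
      rw [St9.sum_range_eq _ heinj (fun y => ρ (St9.Fij i j 0 0 u) y * W y)
        (fun y hy => by beta_reduce; rw [hW0 y hy, mul_zero])]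
      exact Finset.sum_congr rfl fun v _ => by rw [hWe]
    have h2 : dotProduct (star w)
        ((fun u v => 2 * ρ (St9.Fij i j 0 0 u) (St9.Fij i j 0 0 v) :
          Matrix _ _ ℂ) *ᵥ w) = 2 * dotProduct (star W) (ρ *ᵥ W) := by
      rw [h1]
      simp only [dotProduct, Pi.star_apply, Matrix.mulVec, mul_assoc, ← Finset.mul_sum]
      have hcomm : ∀ a S : ℂ, a * (2 * S) = 2 * (a * S) := fun a S => by ring
      simp only [hcomm]
      rw [← Finset.mul_sum]
    rw [h2]
    have h02 : (0 : ℂ) ≤ 2 := by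
      rw [show (2 : ℂ) = ((2 : ℝ) : ℂ) by norm_num]
      exact_mod_cast (by norm_num : (0 : ℝ) ≤ 2)
    exact mul_nonneg h02 hq
  · -- trace
    have hbij : Function.Bijective
        (fun t : Fin 2 × Fin 2 × ({k // k ∈ (({i, j} : Finset (Fin n))ᶜ : Finset (Fin n))} → Fin 2)
          => St9.Fij i j t.1 t.2.1 t.2.2) := by
      constructor
      · rintro ⟨a, b, u⟩ ⟨a', b', u'⟩ h
        simp only at h
        have ha := congrFun h i
        rw [St9.Fij_apply_i, St9.Fij_apply_i] at ha
        have hb := congrFun h j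
        rw [St9.Fij_apply_j hij, St9.Fij_apply_j hij] at hb
        have hu := congrArg (St9.resij i j) h
        rw [St9.resij_Fij, St9.resij_Fij] at hu
        simp [Prod.ext_iff, ha, hb, hu]
      · intro x
        exact ⟨(x i, x j, St9.resij i j x), St9.Fij_resij hij x⟩
    have htr2 : ∑ x, ρ x x = 1 := by
      simpa [Matrix.trace, Matrix.diag] using htr
    have hz01 : ∀ u, ρ (St9.Fij i j 0 1 u) (St9.Fij i j 0 1 u) = 0 := fun u =>
      hZl _ _ (by rw [St9.Fij_apply_i, St9.Fij_apply_j hij]; decide)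
    have hz10 : ∀ u, ρ (St9.Fij i j 1 0 u) (St9.Fij i j 1 0 u) = 0 := fun u =>
      hZl _ _ (by rw [St9.Fij_apply_i, St9.Fij_apply_j hij]; decide)
    have h11 : ∀ u, ρ (St9.Fij i j 1 1 u) (St9.Fij i j 1 1 u) =
        ρ (St9.Fij i j 0 0 u) (St9.Fij i j 0 0 u) := by
      intro u
      have hf : St9.Fij i j 1 1 u = St9.flipij i j (St9.Fij i j 0 0 u) := by
        rw [St9.flip_Fij hij]; norm_num
      rw [hf, hXl, hXr]
    have hkey2 : ∑ u, (2 * ρ (St9.Fij i j 0 0 u) (St9.Fij i j 0 0 u)) = ∑ x, ρ x x := by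
      rw [← Fintype.sum_bijective _ hbij _ (fun x => ρ x x) (fun t => rfl)]
      simp only [Fintype.sum_prod_type, Fin.sum_univ_two]
      simp only [hz01, hz10, h11, Finset.sum_const_zero, add_zero, zero_add]
      rw [← Finset.sum_add_distrib]
      exact Finset.sum_congr rfl fun u _ => (two_mul _)
    have : Matrix.trace (fun u v => 2 * ρ (St9.Fij i j 0 0 u) (St9.Fij i j 0 0 v) :
        Matrix _ _ ℂ) = ∑ u, (2 * ρ (St9.Fij i j 0 0 u) (St9.Fij i j 0 0 u)) := by
      simp [Matrix.trace, Matrix.diag]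
    rw [this, hkey2, htr2]
  · -- the entry formula
    intro x y
    show ρ x y = bellAmp (x i) (x j) * star (bellAmp (y i) (y j)) *
      (2 * ρ (St9.Fij i j 0 0 (St9.resij i j x)) (St9.Fij i j 0 0 (St9.resij i j y)))
    by_cases hx : x i = x j
    · by_cases hy : y i = y j
      · have hstep1 : ∀ z : Fin n → Fin 2, z i = z j →
            ∀ w, ρ z w = ρ (St9.Fij i j 0 0 (St9.resij i j z)) w := by
          intro z hz w
          have h01 : z i = 0 ∨ z i = 1 := by omega
          rcases h01 with h0 | h1
          · have hzj : z j = 0 := by omega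
            conv_lhs => rw [← St9.Fij_resij hij z, h0, hzj]
          · have hzj : z j = 1 := by omega
            conv_lhs => rw [← St9.Fij_resij hij z, h1, hzj]
            have hf : St9.Fij i j 1 1 (St9.resij i j z) =
                St9.flipij i j (St9.Fij i j 0 0 (St9.resij i j z)) := by
              rw [St9.flip_Fij hij]; norm_num
            rw [hf, hXl]
        have hstep2 : ∀ z : Fin n → Fin 2, z i = z j →
            ∀ w, ρ w z = ρ w (St9.Fij i j 0 0 (St9.resij i j z)) := by
          intro z hz w
          have h01 : z i = 0 ∨ z i = 1 := by omega
          rcases h01 with h0 | h1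
          · have hzj : z j = 0 := by omega
            conv_lhs => rw [← St9.Fij_resij hij z, h0, hzj]
          · have hzj : z j = 1 := by omega
            conv_lhs => rw [← St9.Fij_resij hij z, h1, hzj]
            have hf : St9.Fij i j 1 1 (St9.resij i j z) =
                St9.flipij i j (St9.Fij i j 0 0 (St9.resij i j z)) := by
              rw [St9.flip_Fij hij]; norm_num
            rw [hf, hXr]
        have hs2 : ((Real.sqrt 2 : ℝ) : ℂ) * ((Real.sqrt 2 : ℝ) : ℂ) = 2 := by
          rw [← Complex.ofReal_mul, Real.mul_self_sqrt (by norm_num : (0 : ℝ) ≤ 2)]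
          norm_num
        have hsne : ((Real.sqrt 2 : ℝ) : ℂ) ≠ 0 := by
          exact_mod_cast ne_of_gt (Real.sqrt_pos.mpr (by norm_num : (0 : ℝ) < 2))
        have hstar : star (((Real.sqrt 2 : ℝ) : ℂ)⁻¹) = ((Real.sqrt 2 : ℝ) : ℂ)⁻¹ := by
          simp [Complex.star_def, Complex.conj_ofReal]
        rw [bellAmp, if_pos hx, bellAmp, if_pos hy, hstar]
        rw [hstep1 x hx, hstep2 y hy]
        rw [← hs2]
        field_simp
      · rw [hZr x y hy]
        simp [bellAmp, hy]
    · rw [hZl x y hx]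
      simp [bellAmp, hx]

end
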